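/- Let f(t) = ∑_{n∈ℤ} a_n t^n be a Laurent polynomial with real coefficients which is positive, i.e., f(z) is a nonnegative real number for every z ∈ ℂ with |z| = 1. Let m ≥ 1 be an integer such that a_n = 0 for every integer n > m divisible by m. Then |a_m| ≤ a_0 / 2. -/

import Mathlib

open LaurentPolynomial ComplexOrder

/-- The value of a real Laurent polynomial `f = ∑ aₙ tⁿ` at a complex number `z ≠ 0`. -/
noncomputable def evalCircle (f : LaurentPolynomial ℝ) (z : ℂ) : ℂ :=
  Finsupp.sum (AddMonoidAlgebra.coeff f) fun n c => (c : ℂ) * z ^ n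

/-- The coefficient `aₙ` of a real Laurent polynomial `f = ∑ aₙ tⁿ`. -/
def coeffL (f : LaurentPolynomial ℝ) (n : ℤ) : ℝ := (AddMonoidAlgebra.coeff f : ℤ →₀ ℝ) n

lemma master (f : LaurentPolynomial ℝ) (N : ℕ) (hN : N ≠ 0) (ω η : ℂ)
    (hω : IsPrimitiveRoot ω N) (t : ℤ) :
    (∑ k ∈ Finset.range N, evalCircle f (η * ω ^ k) * ω ^ ((k : ℤ) * t)) =
      (N : ℂ) * ∑ n ∈ (AddMonoidAlgebra.coeff f).support.filter (fun n => (N : ℤ) ∣ n + t),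
        ((coeffL f n : ℂ) * η ^ n) := by
  have hω0 : ω ≠ 0 := by
    intro h
    have h1 := hω.pow_eq_one
    rw [h, zero_pow hN] at h1
    exact zero_ne_one h1
  have step1 : ∀ k ∈ Finset.range N,
      evalCircle f (η * ω ^ k) * ω ^ ((k : ℤ) * t)
        = ∑ n ∈ (AddMonoidAlgebra.coeff f).support, (coeffL f n : ℂ) * η ^ n * (ω ^ (n + t)) ^ k := by
    intro k _
    rw [evalCircle, Finsupp.sum, Finset.sum_mul]
    refine Finset.sum_congr rfl fun n _ => ?_
    have e1 : (η * ω ^ k) ^ n = η ^ n * ω ^ ((k : ℤ) * n) := by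
      rw [mul_zpow, ← zpow_natCast ω k, ← zpow_mul]
    have e2 : ((ω ^ (n + t)) ^ k : ℂ) = ω ^ ((k : ℤ) * n + (k : ℤ) * t) := by
      rw [← zpow_natCast (ω ^ (n + t)) k, ← zpow_mul]
      ring_nf
    rw [e1, e2, zpow_add₀ hω0]
    unfold coeffL
    ring
  rw [Finset.sum_congr rfl step1, Finset.sum_comm]
  have step2 : ∀ n ∈ (AddMonoidAlgebra.coeff f).support,
      (∑ k ∈ Finset.range N, (coeffL f n : ℂ) * η ^ n * (ω ^ (n + t)) ^ k)
        = (coeffL f n : ℂ) * η ^ n * (if (N : ℤ) ∣ n + t then (N : ℂ) else 0) := by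
    intro n _
    rw [← Finset.mul_sum]
    congr 1
    by_cases h : ω ^ (n + t) = 1
    · rw [if_pos ((hω.zpow_eq_one_iff_dvd _).mp h)]
      simp [h]
    · rw [if_neg (fun hd => h ((hω.zpow_eq_one_iff_dvd _).mpr hd)), geom_sum_eq h]
      have hx : (ω ^ (n + t)) ^ N = 1 := by
        rw [← zpow_natCast (ω ^ (n + t)) N, ← zpow_mul, mul_comm, zpow_mul, zpow_natCast,
          hω.pow_eq_one, one_zpow]
      rw [hx, sub_self, zero_div]
  rw [Finset.sum_congr rfl step2, Finset.mul_sum, Finset.sum_filter]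
  refine Finset.sum_congr rfl fun n _ => ?_
  by_cases h : (N : ℤ) ∣ n + t
  · simp only [if_pos h]; ring
  · simp only [if_neg h, mul_zero, if_neg h]

lemma conj_eval (f : LaurentPolynomial ℝ)
    (hpos : ∀ z : ℂ, ‖z‖ = 1 → 0 ≤ evalCircle f z)
    {z : ℂ} (hz : ‖z‖ = 1) :
    (starRingEnd ℂ) (evalCircle f z) = evalCircle f z := by
  have h := hpos z hz
  rw [Complex.le_def] at h
  rw [Complex.conj_eq_iff_im]
  simpa using h.2.symm

lemma abs_root (N : ℕ) (_hN : N ≠ 0) :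
    ‖Complex.exp (2 * Real.pi * Complex.I / N)‖ = 1 := by
  rw [Complex.norm_exp]
  have : (2 * (Real.pi : ℂ) * Complex.I / N).re = 0 := by
    simp [Complex.div_re, Complex.mul_re, Complex.mul_im]
  rw [this, Real.exp_zero]

/-- symmetry of coefficients -/
lemma coeff_symm (f : LaurentPolynomial ℝ)
    (hpos : ∀ z : ℂ, ‖z‖ = 1 → 0 ≤ evalCircle f z) (n : ℤ) :
    coeffL f (-n) = coeffL f n := by
  set N : ℕ := ((AddMonoidAlgebra.coeff f).support.sup fun x => x.natAbs) + n.natAbs + 1 with hNdef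
  have hN : N ≠ 0 := by omega
  set ω : ℂ := Complex.exp (2 * Real.pi * Complex.I / N) with hωdef
  have hω : IsPrimitiveRoot ω N := Complex.isPrimitiveRoot_exp N hN
  have hωabs : ‖ω‖ = 1 := abs_root N hN
  have habs : ∀ k : ℕ, ‖(1 : ℂ) * ω ^ k‖ = 1 := by
    intro k; rw [one_mul, norm_pow, hωabs, one_pow]
  have hsmall : ∀ j ∈ (AddMonoidAlgebra.coeff f).support, j.natAbs ≤ ((AddMonoidAlgebra.coeff f).support.sup fun x => x.natAbs) :=
    fun j hj => Finset.le_sup hj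
  -- the two filter sums
  have filt : ∀ t : ℤ, t.natAbs = n.natAbs →
      (∑ j ∈ (AddMonoidAlgebra.coeff f).support.filter (fun j => (N : ℤ) ∣ j + t), ((coeffL f j : ℂ) * (1:ℂ) ^ j))
        = (coeffL f (-t) : ℂ) := by
    intro t ht
    have hsub : (AddMonoidAlgebra.coeff f).support.filter (fun j => (N : ℤ) ∣ j + t) ⊆ {-t} := by
      intro j hj
      rw [Finset.mem_filter] at hj
      obtain ⟨hj1, hj2⟩ := hj
      have hb := hsmall j hj1
      have hlt : |j + t| < (N : ℤ) := by
        have h1 : (j + t).natAbs ≤ j.natAbs + t.natAbs := Int.natAbs_add_le j t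
        rw [Int.abs_eq_natAbs]
        have h2 : (j + t).natAbs < N := by omega
        exact_mod_cast h2
      have := Int.eq_zero_of_abs_lt_dvd hj2 hlt
      simp only [Finset.mem_singleton]
      omega
    rw [Finset.sum_subset hsub]
    · by_cases hmem : (-t) ∈ (AddMonoidAlgebra.coeff f).support
      · rw [Finset.sum_singleton, one_zpow, mul_one]
      · have : coeffL f (-t) = 0 := Finsupp.notMem_support_iff.mp hmem
        simp [this]
    · intro x hx hnx
      rw [Finset.mem_singleton] at hx
      subst hx
      have hns : (-t) ∉ (AddMonoidAlgebra.coeff f).support := by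
        intro hmem
        exact hnx (Finset.mem_filter.mpr ⟨hmem, by simp⟩)
      have : coeffL f (-t) = 0 := Finsupp.notMem_support_iff.mp hns
      simp [this]
  have A := master f N hN ω 1 hω (-n)
  have B := master f N hN ω 1 hω n
  have fA := filt (-n) (by simp)
  rw [neg_neg] at fA
  rw [fA] at A
  rw [filt n rfl] at B
  -- conjugate A's LHS equals B's LHS
  have hconj : (starRingEnd ℂ) (∑ k ∈ Finset.range N, evalCircle f (1 * ω ^ k) * ω ^ ((k : ℤ) * (-n)))
      = ∑ k ∈ Finset.range N, evalCircle f (1 * ω ^ k) * ω ^ ((k : ℤ) * n) := by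
    rw [map_sum]
    refine Finset.sum_congr rfl fun k _ => ?_
    rw [map_mul, conj_eval f hpos (habs k)]
    congr 1
    rw [map_zpow₀, ← Complex.inv_eq_conj (by rw [hωabs]), inv_zpow, ← zpow_neg]
    congr 1
    ring
  rw [A, B] at hconj
  have hNc : (N : ℂ) ≠ 0 := by exact_mod_cast hN
  have : ((coeffL f (-n) : ℂ)) = (coeffL f n : ℂ) := by
    have := hconj
    rw [map_mul, Complex.conj_natCast, Complex.conj_ofReal] at this
    exact mul_left_cancel₀ hNc this.symm
  exact_mod_cast this

theorem stmt_8 (f : LaurentPolynomial ℝ)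
    (hpos : ∀ z : ℂ, ‖z‖ = 1 → 0 ≤ evalCircle f z)
    (m : ℕ) (hm : 1 ≤ m)
    (hvan : ∀ n : ℤ, (m : ℤ) < n → (m : ℤ) ∣ n → coeffL f n = 0) :
    |coeffL f m| ≤ coeffL f 0 / 2 := by
  have hsymm := coeff_symm f hpos
  have hvan' : ∀ n : ℤ, (m : ℤ) < |n| → (m : ℤ) ∣ n → coeffL f n = 0 := by
    intro n hn hd
    rcases le_or_gt 0 n with h | h
    · exact hvan n (by rwa [abs_of_nonneg h] at hn) hd
    · rw [show n = -(-n) by ring, hsymm (-n)]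
      exact hvan (-n) (by rw [abs_of_neg h] at hn; exact hn) (dvd_neg.mpr hd)
  have hmZ : (0 : ℤ) < m := by exact_mod_cast hm
  have hmN : m ≠ 0 := by omega
  set ω : ℂ := Complex.exp (2 * Real.pi * Complex.I / m) with hωdef
  have hω : IsPrimitiveRoot ω m := Complex.isPrimitiveRoot_exp m hmN
  have hωabs : ‖ω‖ = 1 := abs_root m hmN
  -- evaluate filter sum for any η
  have filt3 : ∀ η : ℂ,
      (∑ n ∈ (AddMonoidAlgebra.coeff f).support.filter (fun n => (m : ℤ) ∣ n + 0), ((coeffL f n : ℂ) * η ^ n))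
        = (coeffL f (-(m:ℤ)) : ℂ) * η ^ (-(m:ℤ)) + (coeffL f 0 : ℂ) * η ^ (0:ℤ)
            + (coeffL f (m:ℤ) : ℂ) * η ^ (m:ℤ) := by
    intro η
    have hsub : (AddMonoidAlgebra.coeff f).support.filter (fun n => (m : ℤ) ∣ n + 0) ⊆ {-(m:ℤ), 0, (m:ℤ)} := by
      intro j hj
      rw [Finset.mem_filter] at hj
      obtain ⟨hj1, hj2⟩ := hj
      rw [add_zero] at hj2
      have hjv : ¬ ((m:ℤ) < |j|) := fun hlt =>
        Finsupp.notMem_support_iff.mpr (hvan' j hlt hj2) hj1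
      have hj3 : |j| ≤ (m:ℤ) := by omega
      rcases hj2 with ⟨c, hc⟩
      have hmZ : (0:ℤ) < m := by exact_mod_cast hm
      have hcabs : |c| ≤ 1 := by
        by_contra hgt
        push_neg at hgt
        have h2c : 2 ≤ |c| := hgt
        have : 2 * (m:ℤ) ≤ |j| := by
          rw [hc, abs_mul, abs_of_nonneg hmZ.le]
          nlinarith
        omega
      have hcb : -1 ≤ c ∧ c ≤ 1 := abs_le.mp hcabs
      have hcases : c = -1 ∨ c = 0 ∨ c = 1 := by omega
      have : j = -(m:ℤ) ∨ j = 0 ∨ j = (m:ℤ) := by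
        rcases hcases with h | h | h <;> subst h <;> omega
      simpa using this
    rw [Finset.sum_subset hsub]
    · have h1 : (-(m:ℤ)) ∉ ({0, (m:ℤ)} : Finset ℤ) := by
        simp; omega
      have h2 : (0:ℤ) ∉ ({(m:ℤ)} : Finset ℤ) := by
        simp; omega
      rw [show ({-(m:ℤ), 0, (m:ℤ)} : Finset ℤ) = insert (-(m:ℤ)) ({0, (m:ℤ)} : Finset ℤ) from rfl,
        Finset.sum_insert h1,
        show ({0, (m:ℤ)} : Finset ℤ) = insert (0:ℤ) ({(m:ℤ)} : Finset ℤ) from rfl,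
        Finset.sum_insert h2, Finset.sum_singleton]
      ring
    · intro x hx hnx
      have : x ∉ (AddMonoidAlgebra.coeff f).support := by
        intro hmem
        refine hnx (Finset.mem_filter.mpr ⟨hmem, ?_⟩)
        rw [add_zero]
        simp at hx
        rcases hx with h | h | h <;> simp [h]
      have : coeffL f x = 0 := Finsupp.notMem_support_iff.mp this
      simp [this]
  -- key nonnegativity for η with |η| = 1
  have key : ∀ η : ℂ, ‖η‖ = 1 →
      (0:ℂ) ≤ (m : ℂ) * ((coeffL f (-(m:ℤ)) : ℂ) * η ^ (-(m:ℤ)) + (coeffL f 0 : ℂ) * η ^ (0:ℤ)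
            + (coeffL f (m:ℤ) : ℂ) * η ^ (m:ℤ)) := by
    intro η hη
    have := master f m hmN ω η hω 0
    rw [filt3 η] at this
    rw [← this]
    apply Finset.sum_nonneg
    intro k _
    have habs : ‖η * ω ^ k‖ = 1 := by
      rw [norm_mul, hη, norm_pow, hωabs, one_pow, one_mul]
    have h := hpos _ habs
    simpa using h
  -- case η = 1
  have case1 : (0:ℝ) ≤ (m:ℝ) * (coeffL f (-(m:ℤ)) + coeffL f 0 + coeffL f (m:ℤ)) := by
    have h := key 1 (by simp)
    simp only [one_zpow, mul_one] at h
    rw [show ((coeffL f (-(m:ℤ)) : ℂ)) + (coeffL f 0 : ℂ) + (coeffL f (m:ℤ) : ℂ)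
        = ((coeffL f (-(m:ℤ)) + coeffL f 0 + coeffL f (m:ℤ) : ℝ) : ℂ) by push_cast; ring] at h
    rw [show ((m:ℂ)) = ((m:ℝ):ℂ) by push_cast; ring, ← Complex.ofReal_mul] at h
    exact Complex.zero_le_real.mp h
  -- case η = exp(πi/m)
  have case2 : (0:ℝ) ≤ (m:ℝ) * (-coeffL f (-(m:ℤ)) + coeffL f 0 - coeffL f (m:ℤ)) := by
    set η : ℂ := Complex.exp (Real.pi * Complex.I / m) with hηdef
    have hηabs : ‖η‖ = 1 := by
      rw [Complex.norm_exp]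
      have : ((Real.pi : ℂ) * Complex.I / m).re = 0 := by
        simp [Complex.div_re, Complex.mul_re, Complex.mul_im]
      rw [this, Real.exp_zero]
    have hηm : η ^ ((m:ℤ)) = -1 := by
      rw [zpow_natCast, ← Complex.exp_nat_mul]
      have : (m : ℂ) * ((Real.pi : ℂ) * Complex.I / m) = (Real.pi : ℂ) * Complex.I := by
        field_simp
      rw [this, Complex.exp_pi_mul_I]
    have hηmn : η ^ (-(m:ℤ)) = -1 := by
      rw [zpow_neg, hηm, inv_neg, inv_one]
    have h := key η hηabs
    rw [hηm, hηmn] at h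
    simp only [zpow_zero, mul_one] at h
    rw [show ((coeffL f (-(m:ℤ)) : ℂ)) * (-1) + (coeffL f 0 : ℂ) + (coeffL f (m:ℤ) : ℂ) * (-1)
        = ((-coeffL f (-(m:ℤ)) + coeffL f 0 - coeffL f (m:ℤ) : ℝ) : ℂ) by push_cast; ring] at h
    rw [show ((m:ℂ)) = ((m:ℝ):ℂ) by push_cast; ring, ← Complex.ofReal_mul] at h
    exact Complex.zero_le_real.mp h
  have hmpos : (0:ℝ) < m := by exact_mod_cast hmZ
  have hs : coeffL f (-(m:ℤ)) = coeffL f (m:ℤ) := hsymm m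
  rw [hs] at case1 case2
  have h1 : 0 ≤ coeffL f 0 + 2 * coeffL f (m:ℤ) := by nlinarith
  have h2 : 0 ≤ coeffL f 0 - 2 * coeffL f (m:ℤ) := by nlinarith
  rw [abs_le]
  constructor <;> linarith
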